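/- arXiv:1903.02693 — 4 statements merged into one kernel-verified Lean document; each statement's English description precedes it below -/
import Mathlib

section
/- Let d ≥ 1, θ > 0 and M ≥ 0. Let u, v : ℝᵈ → ℝ be Lebesgue integrable, let J : ℝᵈ → [0,∞) be measurable, vanishing outside the closed ball of radius θ centered at the origin, with ∫_{ℝᵈ} J = 1, and let η : ℝ → ℝ be measurable with η(r) ≥ max(r,0) for all r. Assume that ∫_{ℝᵈ} max(u(x+h) − u(x), 0) dx ≤ M for every h ∈ ℝᵈ with ‖h‖ ≤ θ. Then ∫_{ℝᵈ} max(v(x) − u(x), 0) dx ≤ ∫_{ℝᵈ}∫_{ℝᵈ} η(v(y) − u(x)) J(y − x) dy dx + M, where the double integral is allowed to be +∞. -/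
open MeasureTheory

private lemma posPart_tri (a b c : ℝ) : max (a - c) 0 ≤ max (a - b) 0 + max (b - c) 0 := by
  have h1 := le_max_left (a - b) (0:ℝ)
  have h2 := le_max_left (b - c) (0:ℝ)
  have h3 := le_max_right (a - b) (0:ℝ)
  have h4 := le_max_right (b - c) (0:ℝ)
  exact max_le (by linarith) (by linarith)

private lemma core {d : ℕ} (θ M : ℝ) (hM : 0 ≤ M)
    (u v : EuclideanSpace ℝ (Fin d) → ℝ)
    (hum : Measurable u) (hvm : Measurable v)
    (hu : Integrable u) (hv : Integrable v)
    (J : EuclideanSpace ℝ (Fin d) → ℝ) (hJm : Measurable J)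
    (hJ0 : ∀ x, 0 ≤ J x)
    (hJsupp : ∀ x, x ∉ Metric.closedBall (0 : EuclideanSpace ℝ (Fin d)) θ → J x = 0)
    (hJ1 : ∫ x, J x = 1)
    (η : ℝ → ℝ) (hηm : Measurable η) (hη : ∀ r : ℝ, max r 0 ≤ η r)
    (hmod : ∀ h : EuclideanSpace ℝ (Fin d), ‖h‖ ≤ θ →
      ∫ x, max (u (x + h) - u x) 0 ≤ M) :
    ENNReal.ofReal (∫ x, max (v x - u x) 0) ≤
      (∫⁻ x, ∫⁻ y, ENNReal.ofReal (η (v y - u x) * J (y - x))) +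
        ENNReal.ofReal M := by
  have hJint : Integrable J := by
    by_contra h
    rw [integral_undef h] at hJ1
    norm_num at hJ1
  set jR : EuclideanSpace ℝ (Fin d) → ENNReal := fun x => ENNReal.ofReal (J x) with hjRdef
  have hjRm : Measurable jR := hJm.ennreal_ofReal
  have hjR1 : ∫⁻ x, jR x = 1 := by
    rw [← ofReal_integral_eq_lintegral_ofReal hJint (Filter.Eventually.of_forall hJ0), hJ1,
      ENNReal.ofReal_one]
  have hjtrans : ∀ y : EuclideanSpace ℝ (Fin d), ∫⁻ x, jR (y - x) = 1 := fun y => by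
    rw [(Measure.measurePreserving_sub_left volume y).lintegral_comp hjRm]
    exact hjR1
  -- Step 1: LHS as a lintegral
  have hint : Integrable (fun x => max (v x - u x) 0) := (hv.sub hu).pos_part
  have h1 : ENNReal.ofReal (∫ x, max (v x - u x) 0)
      = ∫⁻ y, ENNReal.ofReal (max (v y - u y) 0) :=
    ofReal_integral_eq_lintegral_ofReal hint
      (Filter.Eventually.of_forall fun x => le_max_right _ _)
  -- Step 2: insert J
  have h2 : (∫⁻ y, ENNReal.ofReal (max (v y - u y) 0))
      = ∫⁻ y, ∫⁻ x, ENNReal.ofReal (max (v y - u y) 0) * jR (y - x) := by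
    refine lintegral_congr fun y => ?_
    have hm : Measurable fun x : EuclideanSpace ℝ (Fin d) => jR (y - x) :=
      hjRm.comp (measurable_const.sub measurable_id)
    rw [lintegral_const_mul _ hm, hjtrans y, mul_one]
  -- Step 3: swap the two integrals
  have hswapm : Measurable (Function.uncurry fun y x =>
      ENNReal.ofReal (max (v y - u y) 0) * jR (y - x)) := by
    apply Measurable.fun_mul
    · exact (((hvm.comp measurable_fst).sub (hum.comp measurable_fst)).max
        measurable_const).ennreal_ofReal
    · exact hjRm.comp (measurable_fst.sub measurable_snd)
  have h3 : (∫⁻ y, ∫⁻ x, ENNReal.ofReal (max (v y - u y) 0) * jR (y - x))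
      = ∫⁻ x, ∫⁻ y, ENNReal.ofReal (max (v y - u y) 0) * jR (y - x) :=
    lintegral_lintegral_swap hswapm.aemeasurable
  -- measurability of the two split integrands on the product space
  have hAm : Measurable (Function.uncurry fun x y =>
      ENNReal.ofReal (max (v y - u x) 0) * jR (y - x)) := by
    apply Measurable.fun_mul
    · exact (((hvm.comp measurable_snd).sub (hum.comp measurable_fst)).max
        measurable_const).ennreal_ofReal
    · exact hjRm.comp (measurable_snd.sub measurable_fst)
  have hBm : Measurable (Function.uncurry fun x y =>
      ENNReal.ofReal (max (u x - u y) 0) * jR (y - x)) := by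
    apply Measurable.fun_mul
    · exact (((hum.comp measurable_fst).sub (hum.comp measurable_snd)).max
        measurable_const).ennreal_ofReal
    · exact hjRm.comp (measurable_snd.sub measurable_fst)
  -- Step 4: split via the pointwise triangle inequality for positive parts
  have h4 : (∫⁻ x, ∫⁻ y, ENNReal.ofReal (max (v y - u y) 0) * jR (y - x))
      ≤ (∫⁻ x, ∫⁻ y, ENNReal.ofReal (max (v y - u x) 0) * jR (y - x))
        + ∫⁻ x, ∫⁻ y, ENNReal.ofReal (max (u x - u y) 0) * jR (y - x) := by
    have hfA : Measurable fun x : EuclideanSpace ℝ (Fin d) =>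
        ∫⁻ y, ENNReal.ofReal (max (v y - u x) 0) * jR (y - x) :=
      hAm.lintegral_prod_right'
    calc (∫⁻ x, ∫⁻ y, ENNReal.ofReal (max (v y - u y) 0) * jR (y - x))
        ≤ ∫⁻ x, ((∫⁻ y, ENNReal.ofReal (max (v y - u x) 0) * jR (y - x))
            + ∫⁻ y, ENNReal.ofReal (max (u x - u y) 0) * jR (y - x)) := by
          refine lintegral_mono fun x => ?_
          have hAmx : Measurable fun y => ENNReal.ofReal (max (v y - u x) 0) * jR (y - x) :=
            ((hvm.sub measurable_const).max measurable_const).ennreal_ofReal.mul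
              (hjRm.comp (measurable_id.sub measurable_const))
          calc (∫⁻ y, ENNReal.ofReal (max (v y - u y) 0) * jR (y - x))
              ≤ ∫⁻ y, (ENNReal.ofReal (max (v y - u x) 0) * jR (y - x)
                  + ENNReal.ofReal (max (u x - u y) 0) * jR (y - x)) := by
                refine lintegral_mono fun y => ?_
                rw [← add_mul]
                refine mul_le_mul_left ?_ _
                rw [← ENNReal.ofReal_add (le_max_right _ _) (le_max_right _ _)]
                exact ENNReal.ofReal_le_ofReal (posPart_tri _ _ _)
            _ = _ := lintegral_add_left hAmx _
      _ = _ := lintegral_add_left hfA _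
  -- Step 5: the first term is bounded by the η-double integral
  have h5 : (∫⁻ x, ∫⁻ y, ENNReal.ofReal (max (v y - u x) 0) * jR (y - x))
      ≤ ∫⁻ x, ∫⁻ y, ENNReal.ofReal (η (v y - u x) * J (y - x)) := by
    refine lintegral_mono fun x => lintegral_mono fun y => ?_
    have hη0 : 0 ≤ η (v y - u x) := le_trans (le_max_right _ _) (hη _)
    rw [ENNReal.ofReal_mul hη0]
    exact mul_le_mul_left (ENNReal.ofReal_le_ofReal (hη _)) _
  -- Step 6: the second term is bounded by M
  have h6 : (∫⁻ x, ∫⁻ y, ENNReal.ofReal (max (u x - u y) 0) * jR (y - x))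
      ≤ ENNReal.ofReal M := by
    -- substitute y = x + h in the inner integral
    have hinner : ∀ x : EuclideanSpace ℝ (Fin d),
        (∫⁻ y, ENNReal.ofReal (max (u x - u y) 0) * jR (y - x))
        = ∫⁻ h, ENNReal.ofReal (max (u x - u (x + h)) 0) * jR h := by
      intro x
      rw [← lintegral_add_left_eq_self
        (fun y => ENNReal.ofReal (max (u x - u y) 0) * jR (y - x)) x]
      simp [add_sub_cancel_left]
    calc (∫⁻ x, ∫⁻ y, ENNReal.ofReal (max (u x - u y) 0) * jR (y - x))
        = ∫⁻ x, ∫⁻ h, ENNReal.ofReal (max (u x - u (x + h)) 0) * jR h :=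
          lintegral_congr hinner
      _ = ∫⁻ h, ∫⁻ x, ENNReal.ofReal (max (u x - u (x + h)) 0) * jR h := by
          refine lintegral_lintegral_swap ?_
          apply Measurable.aemeasurable
          apply Measurable.fun_mul
          · exact (((hum.comp measurable_fst).sub
              (hum.comp (measurable_fst.add measurable_snd))).max
              measurable_const).ennreal_ofReal
          · exact hjRm.comp measurable_snd
      _ = ∫⁻ h, (∫⁻ x, ENNReal.ofReal (max (u x - u (x + h)) 0)) * jR h := by
          refine lintegral_congr fun h => ?_
          have hm : Measurable fun x : EuclideanSpace ℝ (Fin d) =>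
              ENNReal.ofReal (max (u x - u (x + h)) 0) :=
            ((hum.sub (hum.comp (measurable_id.add measurable_const))).max
              measurable_const).ennreal_ofReal
          rw [lintegral_mul_const _ hm]
      _ ≤ ∫⁻ h, ENNReal.ofReal M * jR h := by
          refine lintegral_mono fun h => ?_
          by_cases hh : ‖h‖ ≤ θ
          · refine mul_le_mul_left ?_ _
            have hI : Integrable (fun x => max (u x - u (x + h)) 0) :=
              (hu.sub (hu.comp_add_right h)).pos_part
            rw [← ofReal_integral_eq_lintegral_ofReal hI
              (Filter.Eventually.of_forall fun x => le_max_right _ _)]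
            refine ENNReal.ofReal_le_ofReal ?_
            have key : (∫ x, max (u x - u (x + h)) 0)
                = ∫ x, max (u (x + -h) - u x) 0 := by
              have := integral_add_right_eq_self (μ := volume)
                (fun z => max (u (z + -h) - u z) 0) h
              simpa [add_neg_cancel_right] using this
            rw [key]
            exact hmod (-h) (by simpa using hh)
          · have : J h = 0 := hJsupp h (by
              simp only [Metric.mem_closedBall, dist_zero_right]
              exact hh)
            simp [hjRdef, this]
      _ = ENNReal.ofReal M := by
          rw [lintegral_const_mul _ hjRm, hjR1, mul_one]
  calc ENNReal.ofReal (∫ x, max (v x - u x) 0)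
      = ∫⁻ x, ∫⁻ y, ENNReal.ofReal (max (v y - u y) 0) * jR (y - x) := by
        rw [h1, h2, h3]
    _ ≤ (∫⁻ x, ∫⁻ y, ENNReal.ofReal (max (v y - u x) 0) * jR (y - x))
        + ∫⁻ x, ∫⁻ y, ENNReal.ofReal (max (u x - u y) 0) * jR (y - x) := h4
    _ ≤ (∫⁻ x, ∫⁻ y, ENNReal.ofReal (η (v y - u x) * J (y - x)))
        + ENNReal.ofReal M := add_le_add h5 h6

/-- Deterministic core of the mollification-term estimate (Proposition 3.2(iv)):
if the L¹ modulus of continuity of `u` on scale `θ` is at most `M`, and `η`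
dominates the positive part, then `∫ (v - u)_+` is dominated by the
doubled-variable regularized functional plus `M`; the double integral is
interpreted as a Lebesgue integral with values in `[0,∞]`. -/
theorem stmt4 (d : ℕ) (hd : 1 ≤ d) (θ M : ℝ) (hθ : 0 < θ) (hM : 0 ≤ M)
    (u v : EuclideanSpace ℝ (Fin d) → ℝ)
    (hu : Integrable u) (hv : Integrable v)
    (J : EuclideanSpace ℝ (Fin d) → ℝ) (hJm : Measurable J)
    (hJ0 : ∀ x, 0 ≤ J x)
    (hJsupp : ∀ x, x ∉ Metric.closedBall (0 : EuclideanSpace ℝ (Fin d)) θ → J x = 0)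
    (hJ1 : ∫ x, J x = 1)
    (η : ℝ → ℝ) (hηm : Measurable η) (hη : ∀ r : ℝ, max r 0 ≤ η r)
    (hmod : ∀ h : EuclideanSpace ℝ (Fin d), ‖h‖ ≤ θ →
      ∫ x, max (u (x + h) - u x) 0 ≤ M) :
    ENNReal.ofReal (∫ x, max (v x - u x) 0) ≤
      (∫⁻ x, ∫⁻ y, ENNReal.ofReal (η (v y - u x) * J (y - x))) +
        ENNReal.ofReal M := by
  -- replace u, v by measurable representatives
  have hua := hu.aemeasurable
  have hva := hv.aemeasurable
  set u' := hua.mk u with hu'def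
  set v' := hva.mk v with hv'def
  have hu'm : Measurable u' := hua.measurable_mk
  have hv'm : Measurable v' := hva.measurable_mk
  have hu'e : u =ᵐ[volume] u' := hua.ae_eq_mk
  have hv'e : v =ᵐ[volume] v' := hva.ae_eq_mk
  have hu' : Integrable u' := hu.congr hu'e
  have hv' : Integrable v' := hv.congr hv'e
  have hmod' : ∀ h : EuclideanSpace ℝ (Fin d), ‖h‖ ≤ θ →
      ∫ x, max (u' (x + h) - u' x) 0 ≤ M := by
    intro h hh
    have e1 : (fun x => u (x + h)) =ᵐ[volume] (fun x => u' (x + h)) :=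
      (measurePreserving_add_right volume h).quasiMeasurePreserving.ae_eq_comp hu'e
    have : (∫ x, max (u' (x + h) - u' x) 0) = ∫ x, max (u (x + h) - u x) 0 := by
      refine integral_congr_ae ?_
      filter_upwards [e1, hu'e] with x hx1 hx2
      rw [hx1, hx2]
    rw [this]
    exact hmod h hh
  have hL : (∫ x, max (v x - u x) 0) = ∫ x, max (v' x - u' x) 0 := by
    refine integral_congr_ae ?_
    filter_upwards [hu'e, hv'e] with x hx1 hx2
    rw [hx1, hx2]
  have hR : (∫⁻ x, ∫⁻ y, ENNReal.ofReal (η (v y - u x) * J (y - x)))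
      = ∫⁻ x, ∫⁻ y, ENNReal.ofReal (η (v' y - u' x) * J (y - x)) := by
    refine lintegral_congr_ae ?_
    filter_upwards [hu'e] with x hx
    refine lintegral_congr_ae ?_
    filter_upwards [hv'e] with y hy
    rw [hx, hy]
  rw [hL, hR]
  exact core θ M hM u' v' hu'm hv'm hu' hv' J hJm hJ0 hJsupp hJ1 η hηm hη hmod'
end

section
/- Let d ≥ 1, κ > 0, C ≥ 0. Let J : ℝᵈ → [0,∞) be measurable, vanishing outside the closed unit ball, with ∫_{ℝᵈ} J = 1, and for θ > 0 set J_θ(x) := θ^{−d} J(x/θ). Let u : ℝᵈ → ℝ be Lebesgue integrable and suppose that ∫_{ℝᵈ} max(u(x+z) − u(x), 0) dx ≤ C‖z‖^κ for every z ∈ ℝᵈ. Then for every h ∈ ℝᵈ with h ≠ 0, ∫_{ℝᵈ}∫_{ℝᵈ} max(u(y+h) − u(x), 0) J_{‖h‖}(y − x) dy dx ≤ 2C‖h‖^κ. -/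
open MeasureTheory

/-- One direction of the equivalence at the end of Theorem 5.1: if `u` satisfies
the translation form of the fractional BV (Nikolskii) bound with exponent `κ`,
then the mollified doubled-variable form holds with constant `2C`, where
`J_θ(x) = θ^{-d} J(x/θ)` and `θ = ‖h‖`. -/
theorem stmt6 (d : ℕ) (hd : 1 ≤ d) (κ C : ℝ) (hκ : 0 < κ) (hC : 0 ≤ C)
    (J : EuclideanSpace ℝ (Fin d) → ℝ) (hJm : Measurable J)
    (hJ0 : ∀ x, 0 ≤ J x)
    (hJsupp : ∀ x, x ∉ Metric.closedBall (0 : EuclideanSpace ℝ (Fin d)) 1 → J x = 0)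
    (hJ1 : ∫ x, J x = 1)
    (u : EuclideanSpace ℝ (Fin d) → ℝ) (hu : Integrable u)
    (hmod : ∀ z : EuclideanSpace ℝ (Fin d),
      ∫ x, max (u (x + z) - u x) 0 ≤ C * ‖z‖ ^ κ)
    (h : EuclideanSpace ℝ (Fin d)) (hh : h ≠ 0) :
    (∫⁻ x, ∫⁻ y, ENNReal.ofReal
        (max (u (y + h) - u x) 0 * ((‖h‖ ^ d)⁻¹ * J (‖h‖⁻¹ • (y - x))))) ≤
      ENNReal.ofReal (2 * C * ‖h‖ ^ κ) := by
  set θ : ℝ := ‖h‖ with hθdef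
  have hθ : 0 < θ := norm_pos_iff.2 hh
  -- measurable representative of u
  obtain ⟨v, hvm, huv⟩ := hu.1
  have hvmeas : Measurable v := hvm.measurable
  have hv_int : Integrable v := hu.congr huv
  -- translated a.e. equalities
  have htrans : ∀ z : EuclideanSpace ℝ (Fin d), ∀ᵐ x, u (x + z) = v (x + z) := fun z =>
    (measurePreserving_add_right volume z).quasiMeasurePreserving.ae_eq_comp huv
  -- the mollifier
  set W : EuclideanSpace ℝ (Fin d) → ℝ := fun z => (θ ^ d)⁻¹ * J (θ⁻¹ • z) with hWdef
  have hW0 : ∀ z, 0 ≤ W z := fun z =>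
    mul_nonneg (inv_nonneg.2 (pow_nonneg hθ.le d)) (hJ0 _)
  have hWm : Measurable W := (hJm.comp (measurable_const_smul θ⁻¹)).const_mul _
  -- the modulus bound for v
  have hmodv : ∀ z : EuclideanSpace ℝ (Fin d), Integrable (fun x => max (v (x + z) - v x) 0) ∧
      ∫ x, max (v (x + z) - v x) 0 ≤ C * ‖z‖ ^ κ := by
    intro z
    have h1 : Integrable (fun x => v (x + z)) := by
      have := ((measurePreserving_add_right volume z).integrable_comp hv_int.1).2 hv_int
      exact this
    have hint : Integrable (fun x => max (v (x + z) - v x) 0) := (h1.sub hv_int).pos_part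
    refine ⟨hint, ?_⟩
    have heq : ∫ x, max (v (x + z) - v x) 0 = ∫ x, max (u (x + z) - u x) 0 := by
      refine integral_congr_ae ?_
      filter_upwards [huv, htrans z] with x hx hxz
      rw [hx, hxz]
    rw [heq]; exact hmod z
  -- the per-z inner bound
  have hone : ∀ z : EuclideanSpace ℝ (Fin d), ∫⁻ x, ENNReal.ofReal (max (v (x + z) - v x) 0) ≤
      ENNReal.ofReal (C * ‖z‖ ^ κ) := by
    intro z
    obtain ⟨hint, hle⟩ := hmodv z
    rw [← ofReal_integral_eq_lintegral_ofReal hint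
      (Filter.Eventually.of_forall fun x => le_max_right _ _)]
    exact ENNReal.ofReal_le_ofReal hle
  -- Step 1: replace u by v in the double integral
  have step1 : (∫⁻ x, ∫⁻ y, ENNReal.ofReal
        (max (u (y + h) - u x) 0 * ((θ ^ d)⁻¹ * J (θ⁻¹ • (y - x))))) =
      ∫⁻ x, ∫⁻ y, ENNReal.ofReal (max (v (y + h) - v x) 0 * W (y - x)) := by
    refine lintegral_congr_ae ?_
    filter_upwards [huv] with x hx
    refine lintegral_congr_ae ?_
    filter_upwards [htrans h] with y hy
    rw [hx, hy]
  rw [step1]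
  -- Step 2: substitute y = z + x in the inner integral
  have step2 : ∀ x : EuclideanSpace ℝ (Fin d), (∫⁻ y, ENNReal.ofReal (max (v (y + h) - v x) 0 * W (y - x))) =
      ∫⁻ z, ENNReal.ofReal (max (v (z + x + h) - v x) 0) * ENNReal.ofReal (W z) := by
    intro x
    rw [← lintegral_add_right_eq_self
      (fun y => ENNReal.ofReal (max (v (y + h) - v x) 0 * W (y - x))) x]
    refine lintegral_congr fun z => ?_
    rw [add_sub_cancel_right, ENNReal.ofReal_mul (le_max_right _ _)]
  simp_rw [step2]
  -- Step 3: Tonelli swap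
  have hmeasG : Measurable (Function.uncurry fun x z : EuclideanSpace ℝ (Fin d) =>
      ENNReal.ofReal (max (v (z + x + h) - v x) 0) * ENNReal.ofReal (W z)) := by
    refine Measurable.mul (f := fun p : EuclideanSpace ℝ (Fin d) × EuclideanSpace ℝ (Fin d) =>
      ENNReal.ofReal (max (v (p.2 + p.1 + h) - v p.1) 0)) (g := fun p => ENNReal.ofReal (W p.2)) ?_ ?_
    · apply ENNReal.measurable_ofReal.comp
      apply Measurable.max _ measurable_const
      exact ((hvmeas.comp ((measurable_snd.add measurable_fst).add_const h)).sub
        (hvmeas.comp measurable_fst))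
    · exact (ENNReal.measurable_ofReal.comp (hWm.comp measurable_snd))
  rw [lintegral_lintegral_swap hmeasG.aemeasurable]
  -- Step 4: bound the inner integral for each z
  have step4 : ∀ z : EuclideanSpace ℝ (Fin d), (∫⁻ x, ENNReal.ofReal (max (v (z + x + h) - v x) 0) *
        ENNReal.ofReal (W z)) ≤ ENNReal.ofReal (2 * C * θ ^ κ) * ENNReal.ofReal (W z) := by
    intro z
    rw [lintegral_mul_const _ (by
      apply ENNReal.measurable_ofReal.comp
      exact ((hvmeas.comp ((measurable_id.const_add z).add_const h)).sub hvmeas).max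
        measurable_const)]
    by_cases hWz : W z = 0
    · rw [hWz, ENNReal.ofReal_zero, mul_zero, mul_zero]
    · -- on the support of W, ‖z‖ ≤ θ
      have hzθ : ‖z‖ ≤ θ := by
        by_contra hzc
        push_neg at hzc
        apply hWz
        have : J (θ⁻¹ • z) = 0 := by
          apply hJsupp
          simp only [Metric.mem_closedBall, dist_zero_right, norm_smul, norm_inv,
            Real.norm_eq_abs, abs_of_pos hθ, not_le]
          rw [← div_eq_inv_mul, lt_div_iff₀ hθ]
          linarith
        simp [hWdef, this]
      refine mul_le_mul_left ?_ _
      -- split the positive part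
      have hsplit : (∫⁻ x, ENNReal.ofReal (max (v (z + x + h) - v x) 0)) ≤
          (∫⁻ x, ENNReal.ofReal (max (v (x + h + z) - v (x + z)) 0)) +
          ∫⁻ x, ENNReal.ofReal (max (v (x + z) - v x) 0) := by
        rw [← lintegral_add_left (by
          apply ENNReal.measurable_ofReal.comp
          exact ((hvmeas.comp ((measurable_id.add_const h).add_const z)).sub
            (hvmeas.comp (measurable_id.add_const z))).max measurable_const)]
        refine lintegral_mono fun x => ?_
        rw [← ENNReal.ofReal_add (le_max_right _ _) (le_max_right _ _)]
        refine ENNReal.ofReal_le_ofReal ?_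
        have : v (z + x + h) - v x = (v (x + h + z) - v (x + z)) + (v (x + z) - v x) := by
          have : z + x + h = x + h + z := by abel
          rw [this]; ring
        rw [this]
        exact max_le (add_le_add (le_max_left _ _) (le_max_left _ _))
          (add_nonneg (le_max_right _ _) (le_max_right _ _))
      -- first term: translation invariance
      have hA : (∫⁻ x, ENNReal.ofReal (max (v (x + h + z) - v (x + z)) 0)) =
          ∫⁻ x, ENNReal.ofReal (max (v (x + h) - v x) 0) := by
        have := lintegral_add_right_eq_self (μ := (volume : Measure (EuclideanSpace ℝ (Fin d))))
          (fun x => ENNReal.ofReal (max (v (x + h) - v x) 0)) z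
        calc (∫⁻ x, ENNReal.ofReal (max (v (x + h + z) - v (x + z)) 0))
            = ∫⁻ x, ENNReal.ofReal (max (v (x + z + h) - v (x + z)) 0) := by
              refine lintegral_congr fun x => ?_
              have : x + h + z = x + z + h := by abel
              rw [this]
          _ = _ := this
      calc (∫⁻ x, ENNReal.ofReal (max (v (z + x + h) - v x) 0))
          ≤ _ := hsplit
        _ ≤ ENNReal.ofReal (C * θ ^ κ) + ENNReal.ofReal (C * ‖z‖ ^ κ) := by
            refine add_le_add ?_ (hone z)
            rw [hA]
            simpa using hone h
        _ ≤ ENNReal.ofReal (C * θ ^ κ) + ENNReal.ofReal (C * θ ^ κ) := by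
            refine add_le_add le_rfl (ENNReal.ofReal_le_ofReal ?_)
            exact mul_le_mul_of_nonneg_left
              (Real.rpow_le_rpow (norm_nonneg z) hzθ hκ.le) hC
        _ = ENNReal.ofReal (2 * C * θ ^ κ) := by
            rw [← ENNReal.ofReal_add (by positivity) (by positivity)]
            ring_nf
  -- Step 5: integrate the bound in z, using ∫ W = 1
  calc (∫⁻ z, ∫⁻ x, ENNReal.ofReal (max (v (z + x + h) - v x) 0) * ENNReal.ofReal (W z))
      ≤ ∫⁻ z, ENNReal.ofReal (2 * C * θ ^ κ) * ENNReal.ofReal (W z) :=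
        lintegral_mono step4
    _ = ENNReal.ofReal (2 * C * θ ^ κ) * ∫⁻ z, ENNReal.ofReal (W z) :=
        lintegral_const_mul _ (ENNReal.measurable_ofReal.comp hWm)
    _ ≤ ENNReal.ofReal (2 * C * θ ^ κ) := by
        have hJint : Integrable J := by
          by_contra hc
          rw [integral_undef hc] at hJ1
          norm_num at hJ1
        have hJθint : Integrable (fun z => J (θ⁻¹ • z)) :=
          hJint.comp_smul (inv_ne_zero hθ.ne')
        have hWint : Integrable W := hJθint.const_mul _
        have hWlint : (∫⁻ z, ENNReal.ofReal (W z)) = 1 := by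
          rw [← ofReal_integral_eq_lintegral_ofReal hWint
            (Filter.Eventually.of_forall hW0)]
          have : ∫ z, W z = (θ ^ d)⁻¹ * ∫ z, J (θ⁻¹ • z) := by
            simp only [hWdef]
            rw [integral_const_mul]
          rw [this, Measure.integral_comp_inv_smul_of_nonneg volume J hθ.le,
            finrank_euclideanSpace_fin, hJ1, smul_eq_mul, mul_one,
            inv_mul_cancel₀ (pow_ne_zero d hθ.ne'), ENNReal.ofReal_one]
        rw [hWlint, mul_one]
end

section
/- Let d ≥ 1, θ > 0, C ≥ 0. Let J : ℝᵈ → [0,∞) be measurable and even (J(−x) = J(x) for all x), vanishing outside the closed ball of radius θ centered at the origin, with ∫_{ℝᵈ} J = 1. Let u : ℝᵈ → ℝ be Lebesgue integrable and suppose that ∫_{ℝᵈ}∫_{ℝᵈ} max(u(y+z) − u(x), 0) J(y − x) dy dx ≤ C for every z ∈ ℝᵈ with ‖z‖ ≤ θ. Then ∫_{ℝᵈ} max(u(x+h) − u(x), 0) dx ≤ 2C for every h ∈ ℝᵈ with ‖h‖ ≤ θ. -/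
open MeasureTheory

/-- Converse direction of the equivalence at the end of Theorem 5.1: if the
mollified doubled-variable increment bound holds with constant `C` for all shifts
of size at most `θ`, then the translation form holds with constant `2C` for all
shifts of size at most `θ`. -/
theorem stmt7 (d : ℕ) (hd : 1 ≤ d) (θ C : ℝ) (hθ : 0 < θ) (hC : 0 ≤ C)
    (J : EuclideanSpace ℝ (Fin d) → ℝ) (hJm : Measurable J)
    (hJ0 : ∀ x, 0 ≤ J x) (hJeven : ∀ x, J (-x) = J x)
    (hJsupp : ∀ x, x ∉ Metric.closedBall (0 : EuclideanSpace ℝ (Fin d)) θ → J x = 0)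
    (hJ1 : ∫ x, J x = 1)
    (u : EuclideanSpace ℝ (Fin d) → ℝ) (hu : Integrable u)
    (hmoll : ∀ z : EuclideanSpace ℝ (Fin d), ‖z‖ ≤ θ →
      (∫⁻ x, ∫⁻ y, ENNReal.ofReal (max (u (y + z) - u x) 0 * J (y - x))) ≤
        ENNReal.ofReal C)
    (h : EuclideanSpace ℝ (Fin d)) (hh : ‖h‖ ≤ θ) :
    ∫ x, max (u (x + h) - u x) 0 ≤ 2 * C := by
  have hJint : Integrable J (volume : Measure (EuclideanSpace ℝ (Fin d))) := by
    by_contra hcon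
    rw [integral_undef hcon] at hJ1
    norm_num at hJ1
  have hJlint : ∫⁻ x : EuclideanSpace ℝ (Fin d), ENNReal.ofReal (J x) = 1 := by
    rw [← ofReal_integral_eq_lintegral_ofReal hJint (Filter.Eventually.of_forall hJ0), hJ1,
      ENNReal.ofReal_one]
  set μ : Measure (EuclideanSpace ℝ (Fin d)) := volume with hμdef
  have hum : AEMeasurable u μ := hu.aemeasurable
  have qfst : Measure.QuasiMeasurePreserving
      (Prod.fst : EuclideanSpace ℝ (Fin d) × EuclideanSpace ℝ (Fin d) → _) (μ.prod μ) μ :=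
    Measure.quasiMeasurePreserving_fst
  have qsnd : Measure.QuasiMeasurePreserving
      (Prod.snd : EuclideanSpace ℝ (Fin d) × EuclideanSpace ℝ (Fin d) → _) (μ.prod μ) μ :=
    Measure.quasiMeasurePreserving_snd
  have hu1h : AEMeasurable
      (fun p : EuclideanSpace ℝ (Fin d) × EuclideanSpace ℝ (Fin d) => u (p.1 + h)) (μ.prod μ) :=
    (hum.comp_quasiMeasurePreserving
      (measurePreserving_add_right μ h).quasiMeasurePreserving).comp_quasiMeasurePreserving qfst
  have hu1 : AEMeasurable
      (fun p : EuclideanSpace ℝ (Fin d) × EuclideanSpace ℝ (Fin d) => u p.1) (μ.prod μ) :=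
    hum.comp_quasiMeasurePreserving qfst
  have hu2 : AEMeasurable
      (fun p : EuclideanSpace ℝ (Fin d) × EuclideanSpace ℝ (Fin d) => u p.2) (μ.prod μ) :=
    hum.comp_quasiMeasurePreserving qsnd
  have hJd : Measurable
      (fun p : EuclideanSpace ℝ (Fin d) × EuclideanSpace ℝ (Fin d) => J (p.2 - p.1)) :=
    hJm.comp (measurable_snd.sub measurable_fst)
  have hL : AEMeasurable
      (fun p : EuclideanSpace ℝ (Fin d) × EuclideanSpace ℝ (Fin d) =>
        ENNReal.ofReal (max (u (p.1 + h) - u p.1) 0 * J (p.2 - p.1))) (μ.prod μ) :=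
    ENNReal.measurable_ofReal.comp_aemeasurable
      (((hu1h.sub hu1).max aemeasurable_const).mul hJd.aemeasurable)
  have hA : AEMeasurable
      (fun p : EuclideanSpace ℝ (Fin d) × EuclideanSpace ℝ (Fin d) =>
        ENNReal.ofReal (max (u (p.1 + h) - u p.2) 0 * J (p.2 - p.1))) (μ.prod μ) :=
    ENNReal.measurable_ofReal.comp_aemeasurable
      (((hu1h.sub hu2).max aemeasurable_const).mul hJd.aemeasurable)
  have hB : AEMeasurable
      (fun p : EuclideanSpace ℝ (Fin d) × EuclideanSpace ℝ (Fin d) =>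
        ENNReal.ofReal (max (u p.2 - u p.1) 0 * J (p.2 - p.1))) (μ.prod μ) :=
    ENNReal.measurable_ofReal.comp_aemeasurable
      (((hu2.sub hu1).max aemeasurable_const).mul hJd.aemeasurable)
  -- Step 1: insert the mollifier
  have step1 : ∫⁻ x, ENNReal.ofReal (max (u (x + h) - u x) 0) ∂μ
      = ∫⁻ p : EuclideanSpace ℝ (Fin d) × EuclideanSpace ℝ (Fin d),
          ENNReal.ofReal (max (u (p.1 + h) - u p.1) 0 * J (p.2 - p.1)) ∂(μ.prod μ) := by
    rw [lintegral_prod _ hL]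
    refine lintegral_congr fun x => ?_
    have hmul : ∀ y : EuclideanSpace ℝ (Fin d),
        ENNReal.ofReal (max (u (x + h) - u x) 0 * J (y - x))
        = ENNReal.ofReal (max (u (x + h) - u x) 0) * ENNReal.ofReal (J (y - x)) :=
      fun y => ENNReal.ofReal_mul (le_max_right _ _)
    simp only [hmul]
    have hm : AEMeasurable (fun y : EuclideanSpace ℝ (Fin d) => ENNReal.ofReal (J (y - x))) μ :=
      ((hJm.comp (measurable_id.sub measurable_const)).ennreal_ofReal).aemeasurable
    rw [lintegral_const_mul'' _ hm]
    have h1 : ∫⁻ y, ENNReal.ofReal (J (y - x)) ∂μ = 1 := by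
      simp_rw [sub_eq_add_neg]
      rw [lintegral_add_right_eq_self (fun y => ENNReal.ofReal (J y)) (-x), hJlint]
    rw [h1, mul_one]
  -- Step 2: pointwise subadditivity
  have step2 : ∀ p : EuclideanSpace ℝ (Fin d) × EuclideanSpace ℝ (Fin d),
      ENNReal.ofReal (max (u (p.1 + h) - u p.1) 0 * J (p.2 - p.1))
        ≤ ENNReal.ofReal (max (u (p.1 + h) - u p.2) 0 * J (p.2 - p.1))
          + ENNReal.ofReal (max (u p.2 - u p.1) 0 * J (p.2 - p.1)) := by
    intro p
    have hsum : max (u (p.1 + h) - u p.1) 0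
        ≤ max (u (p.1 + h) - u p.2) 0 + max (u p.2 - u p.1) 0 := by
      have h1 : u (p.1 + h) - u p.2 ≤ max (u (p.1 + h) - u p.2) 0 := le_max_left _ _
      have h2 : u p.2 - u p.1 ≤ max (u p.2 - u p.1) 0 := le_max_left _ _
      have h3 : (0:ℝ) ≤ max (u (p.1 + h) - u p.2) 0 := le_max_right _ _
      have h4 : (0:ℝ) ≤ max (u p.2 - u p.1) 0 := le_max_right _ _
      apply max_le <;> linarith
    calc ENNReal.ofReal (max (u (p.1 + h) - u p.1) 0 * J (p.2 - p.1))
        ≤ ENNReal.ofReal ((max (u (p.1 + h) - u p.2) 0 + max (u p.2 - u p.1) 0)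
            * J (p.2 - p.1)) :=
          ENNReal.ofReal_le_ofReal (mul_le_mul_of_nonneg_right hsum (hJ0 _))
      _ = ENNReal.ofReal (max (u (p.1 + h) - u p.2) 0 * J (p.2 - p.1)
            + max (u p.2 - u p.1) 0 * J (p.2 - p.1)) := by ring_nf
      _ = ENNReal.ofReal (max (u (p.1 + h) - u p.2) 0 * J (p.2 - p.1))
            + ENNReal.ofReal (max (u p.2 - u p.1) 0 * J (p.2 - p.1)) :=
          ENNReal.ofReal_add (mul_nonneg (le_max_right _ _) (hJ0 _))
            (mul_nonneg (le_max_right _ _) (hJ0 _))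
  -- Step 3: the first (swapped) term is bounded by C
  have termA : ∫⁻ p : EuclideanSpace ℝ (Fin d) × EuclideanSpace ℝ (Fin d),
      ENNReal.ofReal (max (u (p.1 + h) - u p.2) 0 * J (p.2 - p.1)) ∂(μ.prod μ)
        ≤ ENNReal.ofReal C := by
    rw [lintegral_prod_symm _ hA]
    have heq : ∀ y : EuclideanSpace ℝ (Fin d),
        (∫⁻ x, ENNReal.ofReal (max (u (x + h) - u y) 0 * J (y - x)) ∂μ)
        = ∫⁻ x, ENNReal.ofReal (max (u (x + h) - u y) 0 * J (x - y)) ∂μ := by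
      intro y
      refine lintegral_congr fun x => ?_
      rw [show J (y - x) = J (x - y) by rw [← hJeven (x - y), neg_sub]]
    simp only [heq]
    exact hmoll h hh
  -- Step 4: the second term is bounded by C
  have termB : ∫⁻ p : EuclideanSpace ℝ (Fin d) × EuclideanSpace ℝ (Fin d),
      ENNReal.ofReal (max (u p.2 - u p.1) 0 * J (p.2 - p.1)) ∂(μ.prod μ)
        ≤ ENNReal.ofReal C := by
    rw [lintegral_prod _ hB]
    have := hmoll 0 (by simpa using le_of_lt hθ)
    simpa using this
  -- combine
  have key : ∫⁻ x, ENNReal.ofReal (max (u (x + h) - u x) 0) ∂μ ≤ ENNReal.ofReal (2 * C) := by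
    rw [step1]
    calc ∫⁻ p : EuclideanSpace ℝ (Fin d) × EuclideanSpace ℝ (Fin d),
        ENNReal.ofReal (max (u (p.1 + h) - u p.1) 0 * J (p.2 - p.1)) ∂(μ.prod μ)
        ≤ ∫⁻ p : EuclideanSpace ℝ (Fin d) × EuclideanSpace ℝ (Fin d),
            (ENNReal.ofReal (max (u (p.1 + h) - u p.2) 0 * J (p.2 - p.1))
            + ENNReal.ofReal (max (u p.2 - u p.1) 0 * J (p.2 - p.1))) ∂(μ.prod μ) :=
          lintegral_mono step2
      _ = (∫⁻ p : EuclideanSpace ℝ (Fin d) × EuclideanSpace ℝ (Fin d),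
            ENNReal.ofReal (max (u (p.1 + h) - u p.2) 0 * J (p.2 - p.1)) ∂(μ.prod μ))
          + ∫⁻ p : EuclideanSpace ℝ (Fin d) × EuclideanSpace ℝ (Fin d),
            ENNReal.ofReal (max (u p.2 - u p.1) 0 * J (p.2 - p.1)) ∂(μ.prod μ) :=
          lintegral_add_left' hA _
      _ ≤ ENNReal.ofReal C + ENNReal.ofReal C := add_le_add termA termB
      _ = ENNReal.ofReal (2 * C) := by rw [← ENNReal.ofReal_add hC hC]; ring_nf
  -- back to the Bochner integral
  have hf_int : Integrable (fun x => max (u (x + h) - u x) 0) μ :=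
    ((hu.comp_add_right h).sub hu).pos_part
  rw [integral_eq_lintegral_of_nonneg_ae (f := fun x => max (u (x + h) - u x) 0)
    (Filter.Eventually.of_forall fun x => le_max_right _ _) hf_int.aestronglyMeasurable]
  calc (∫⁻ x, ENNReal.ofReal (max (u (x + h) - u x) 0) ∂μ).toReal
      ≤ (ENNReal.ofReal (2 * C)).toReal := ENNReal.toReal_mono ENNReal.ofReal_ne_top key
    _ = 2 * C := ENNReal.toReal_ofReal (by positivity)
end

section
/- Let d ≥ 1 and let 𝕋ᵈ denote the d-dimensional torus (Fin d → AddCircle 1) equipped with its translation-invariant Haar probability measure. Let ρ > 0, λ > 0, and L, K, S ≥ 0. Let σ, τ : ℝ → ℝ be measurable with |σ(a) − σ(b)| ≤ L|a − b|^λ for all a, b ∈ ℝ and |τ(r) − σ(r)| ≤ S for all r ∈ ℝ. Let m : ℝ → [0,∞) be measurable with m(r) ≤ K/ρ for all r and m(r) = 0 whenever |r| > ρ. Let u, v : 𝕋ᵈ → ℝ be measurable and let J : 𝕋ᵈ → [0,∞) be measurable with ∫_{𝕋ᵈ} J = 1. Then ∫_{𝕋ᵈ}∫_{𝕋ᵈ}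 (τ(v(y)) − σ(u(x)))² m(v(y) − u(x)) J(y − x) dy dx ≤ 2K(S² + L²ρ^{2λ})/ρ. -/
open MeasureTheory

instance : IsProbabilityMeasure (volume : Measure (AddCircle (1:ℝ))) :=
  ⟨by rw [AddCircle.measure_univ]; norm_num⟩

/-- Deterministic core of the Itô-correction-term estimate (Proposition 3.2(iii))
on the torus `𝕋ᵈ = (Fin d → AddCircle 1)` with its Haar probability measure:
if `σ` is `λ`-Hölder with constant `L`, `‖τ - σ‖_∞ ≤ S`, `0 ≤ m ≤ K/ρ` is
supported in `[-ρ, ρ]`, and `J ≥ 0` has unit mass, then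
`∫∫ (τ(v(y)) - σ(u(x)))² m(v(y) - u(x)) J(y - x) ≤ 2K(S² + L²ρ^{2λ})/ρ`. -/
theorem stmt10 (d : ℕ) (hd : 1 ≤ d) (ρ lam L K S : ℝ)
    (hρ : 0 < ρ) (hlam : 0 < lam) (hL : 0 ≤ L) (hK : 0 ≤ K) (hS : 0 ≤ S)
    (σ τ : ℝ → ℝ) (hσm : Measurable σ) (hτm : Measurable τ)
    (hσ : ∀ a b : ℝ, |σ a - σ b| ≤ L * |a - b| ^ lam)
    (hτσ : ∀ r : ℝ, |τ r - σ r| ≤ S)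
    (m : ℝ → ℝ) (hmm : Measurable m) (hm0 : ∀ r : ℝ, 0 ≤ m r)
    (hmK : ∀ r : ℝ, m r ≤ K / ρ) (hmsupp : ∀ r : ℝ, ρ < |r| → m r = 0)
    (u v : (Fin d → AddCircle (1 : ℝ)) → ℝ)
    (hum : Measurable u) (hvm : Measurable v)
    (J : (Fin d → AddCircle (1 : ℝ)) → ℝ) (hJm : Measurable J)
    (hJ0 : ∀ x, 0 ≤ J x) (hJ1 : ∫ x, J x = 1) :
    ∫ x, ∫ y, (τ (v y) - σ (u x)) ^ 2 * m (v y - u x) * J (y - x) ≤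
      2 * K * (S ^ 2 + L ^ 2 * ρ ^ (2 * lam)) / ρ := by
  set C : ℝ := 2 * (S ^ 2 + L ^ 2 * ρ ^ (2 * lam)) * (K / ρ) with hC
  have hbase : 0 ≤ S ^ 2 + L ^ 2 * ρ ^ (2 * lam) := by positivity
  have hC0 : 0 ≤ C := by positivity
  -- J is integrable
  have hJint : Integrable J := by
    by_contra h
    rw [integral_undef h] at hJ1
    norm_num at hJ1
  -- pointwise bound
  have key : ∀ x y, (τ (v y) - σ (u x)) ^ 2 * m (v y - u x) * J (y - x) ≤ C * J (y - x) := by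
    intro x y
    rcases le_or_gt |v y - u x| ρ with hle | hlt
    · have h1 : |τ (v y) - σ (v y)| ≤ S := hτσ _
      have h2 : |σ (v y) - σ (u x)| ≤ L * ρ ^ lam := by
        refine (hσ _ _).trans ?_
        gcongr
      have hsq : (τ (v y) - σ (u x)) ^ 2 ≤ 2 * (S ^ 2 + L ^ 2 * ρ ^ (2 * lam)) := by
        have := abs_sub_abs_le_abs_sub (τ (v y) - σ (u x)) 0
        have hsplit : (τ (v y) - σ (u x)) ^ 2
            ≤ 2 * (τ (v y) - σ (v y)) ^ 2 + 2 * (σ (v y) - σ (u x)) ^ 2 := by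
          nlinarith [sq_nonneg ((τ (v y) - σ (v y)) - (σ (v y) - σ (u x)))]
        have hA : (τ (v y) - σ (v y)) ^ 2 ≤ S ^ 2 := by
          rw [← sq_abs]; exact pow_le_pow_left₀ (abs_nonneg _) h1 2
        have hB : (σ (v y) - σ (u x)) ^ 2 ≤ L ^ 2 * ρ ^ (2 * lam) := by
          rw [← sq_abs]
          calc |σ (v y) - σ (u x)| ^ 2 ≤ (L * ρ ^ lam) ^ 2 :=
                pow_le_pow_left₀ (abs_nonneg _) h2 2
            _ = L ^ 2 * ρ ^ (2 * lam) := by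
                rw [mul_pow, ← Real.rpow_natCast (ρ ^ lam) 2, ← Real.rpow_mul hρ.le]
                norm_num [mul_comm]
        linarith
      have hmb := hmK (v y - u x)
      have hKρ : 0 ≤ K / ρ := by positivity
      have : (τ (v y) - σ (u x)) ^ 2 * m (v y - u x) ≤ C := by
        calc (τ (v y) - σ (u x)) ^ 2 * m (v y - u x)
            ≤ (2 * (S ^ 2 + L ^ 2 * ρ ^ (2 * lam))) * (K / ρ) := by
              apply mul_le_mul hsq hmb (hm0 _) (by positivity)
          _ = C := rfl
      exact mul_le_mul_of_nonneg_right this (hJ0 _)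
    · rw [hmsupp _ hlt]
      simp only [mul_zero, zero_mul]
      exact mul_nonneg hC0 (hJ0 _)
  -- inner integral bound
  have inner_le : ∀ x, ∫ y, (τ (v y) - σ (u x)) ^ 2 * m (v y - u x) * J (y - x) ≤ C := by
    intro x
    have hJx : Integrable (fun y => C * J (y - x)) :=
      ((hJint.comp_sub_right x)).const_mul C
    have h1 : ∫ y, (τ (v y) - σ (u x)) ^ 2 * m (v y - u x) * J (y - x)
        ≤ ∫ y, C * J (y - x) := by
      refine integral_mono_of_nonneg ?_ hJx ?_
      · filter_upwards with y
        have := hm0 (v y - u x); have := hJ0 (y - x); positivity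
      · filter_upwards with y using key x y
    have h2 : ∫ y, C * J (y - x) = C := by
      rw [integral_const_mul, integral_sub_right_eq_self J x, hJ1, mul_one]
    linarith
  have inner_nonneg : ∀ x, 0 ≤ ∫ y, (τ (v y) - σ (u x)) ^ 2 * m (v y - u x) * J (y - x) := by
    intro x
    refine integral_nonneg fun y => ?_
    have := hm0 (v y - u x); have := hJ0 (y - x); positivity
  have houter : ∫ x, ∫ y, (τ (v y) - σ (u x)) ^ 2 * m (v y - u x) * J (y - x) ≤ C := by
    have := integral_mono_of_nonneg (f := fun x =>
        ∫ y, (τ (v y) - σ (u x)) ^ 2 * m (v y - u x) * J (y - x)) (g := fun _ => C)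
      (Filter.Eventually.of_forall inner_nonneg) (integrable_const (μ := (volume : Measure (Fin d → AddCircle (1:ℝ)))) C)
      (Filter.Eventually.of_forall inner_le)
    simpa using this
  calc ∫ x, ∫ y, (τ (v y) - σ (u x)) ^ 2 * m (v y - u x) * J (y - x) ≤ C := houter
    _ = 2 * K * (S ^ 2 + L ^ 2 * ρ ^ (2 * lam)) / ρ := by rw [hC]; ring
end
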